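/- arXiv:2107.10762 — 3 statements merged into one kernel-verified Lean document; each statement's English description precedes it below -/
import Mathlib

section
/- Let n ∈ ℕ, n ≥ 1, and let J̃_N(ω) = (1/(n+1)⁴) · sin⁴((n+1)ω/2)/sin⁴(ω/2). Then for all ω ∈ [−π, π] with ω ≠ 0, |J̃_N'(ω)| ≤ 3π⁴/((n+1)³|ω|⁴). -/
open Real

/-- The Jackson kernel (as a function of ω, away from the singularities). -/
noncomputable def jackson (n : ℕ) (ω : ℝ) : ℝ :=
  (1 / (n + 1 : ℝ) ^ 4) * Real.sin ((n + 1) * ω / 2) ^ 4 / Real.sin (ω / 2) ^ 4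

lemma abs_sin_nat_mul_le' (k : ℕ) (x : ℝ) : |Real.sin (k * x)| ≤ k * |Real.sin x| := by
  induction k with
  | zero => simp
  | succ k ih =>
    have h : ((k + 1 : ℕ) : ℝ) * x = k * x + x := by push_cast; ring
    rw [h, Real.sin_add]
    calc |Real.sin (k * x) * Real.cos x + Real.cos (k * x) * Real.sin x|
        ≤ |Real.sin (k * x) * Real.cos x| + |Real.cos (k * x) * Real.sin x| := abs_add_le _ _
      _ ≤ |Real.sin (k * x)| * 1 + 1 * |Real.sin x| := by
          rw [abs_mul, abs_mul]
          gcongr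
          · exact Real.abs_cos_le_one x
          · exact Real.abs_cos_le_one _
      _ ≤ k * |Real.sin x| + 1 * |Real.sin x| := by simpa using ih
      _ = (k + 1 : ℕ) * |Real.sin x| := by push_cast; ring

lemma cauchy_aux (m a s ca sc : ℝ) (h1 : s ^ 2 + sc ^ 2 = 1) (h2 : a ^ 2 + ca ^ 2 = 1) :
    (m * sc * a - s * ca) ^ 2 ≤ m ^ 2 * a ^ 2 + 1 := by
  nlinarith [sq_nonneg (m * a * s + ca * sc), sq_nonneg a]

lemma key_aux (t S g : ℝ) (ht : 0 ≤ t) (hS0 : 0 ≤ S) (hg0 : 0 ≤ g)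
    (hS1 : S ≤ 1) (hSt : S ≤ t) (hg : g ^ 2 ≤ t ^ 2 + 1) :
    2 * S ^ 3 * g ≤ 3 * t := by
  apply le_of_pow_le_pow_left₀ two_ne_zero (by positivity)
  have hg2 : (0:ℝ) ≤ g ^ 2 := sq_nonneg g
  rcases le_or_gt t 1 with h | h
  · have hS6 : S ^ 6 ≤ t ^ 6 := pow_le_pow_left₀ hS0 hSt 6
    have hprod : S ^ 6 * g ^ 2 ≤ t ^ 6 * (t ^ 2 + 1) :=
      mul_le_mul hS6 hg hg2 (by positivity)
    have h41 : t ^ 4 ≤ 1 := pow_le_one₀ ht h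
    have h61 : t ^ 6 ≤ 1 := pow_le_one₀ ht h
    have h62 : t ^ 6 ≤ t ^ 2 := by nlinarith [mul_le_mul_of_nonneg_right h41 (sq_nonneg t)]
    have h82 : t ^ 8 ≤ t ^ 2 := by nlinarith [mul_le_mul_of_nonneg_right h61 (sq_nonneg t)]
    nlinarith [hprod, h62, h82, sq_nonneg t]
  · have hS6 : S ^ 6 ≤ 1 := pow_le_one₀ hS0 hS1
    have hprod : S ^ 6 * g ^ 2 ≤ 1 * (t ^ 2 + 1) :=
      mul_le_mul hS6 hg hg2 (by norm_num)
    nlinarith [hprod, h]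

theorem jackson_deriv_bound (n : ℕ) (hn : 1 ≤ n) (ω : ℝ)
    (hω : ω ∈ Set.Icc (-Real.pi) Real.pi) (hω0 : ω ≠ 0) :
    |deriv (jackson n) ω| ≤ 3 * Real.pi ^ 4 / ((n + 1 : ℝ) ^ 3 * |ω| ^ 4) := by
  obtain ⟨hωl, hωr⟩ := hω
  set m : ℝ := (n : ℝ) + 1 with hm_def
  have hm1 : (1 : ℝ) ≤ m := by
    rw [hm_def]; have : (0:ℝ) ≤ (n:ℝ) := Nat.cast_nonneg n; linarith
  have hm0 : (0 : ℝ) < m := by linarith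
  set a : ℝ := Real.sin (ω / 2) with ha_def
  set s : ℝ := Real.sin (m * ω / 2) with hs_def
  set ca : ℝ := Real.cos (ω / 2) with hca_def
  set sc : ℝ := Real.cos (m * ω / 2) with hsc_def
  have hπ : (0 : ℝ) < Real.pi := Real.pi_pos
  have hωabs : 0 < |ω| := abs_pos.mpr hω0
  have hωπ : |ω| ≤ Real.pi := abs_le.mpr ⟨hωl, hωr⟩
  -- |a| ≥ |ω|/π > 0
  have hA : |ω| / Real.pi ≤ |a| := by
    have h1 : |a| = Real.sin (|ω| / 2) := by
      rcases le_or_gt 0 ω with h | h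
      · rw [abs_of_nonneg h, ha_def, abs_of_nonneg]
        exact Real.sin_nonneg_of_nonneg_of_le_pi (by linarith) (by linarith)
      · rw [abs_of_neg h, ha_def, abs_of_nonpos, ← Real.sin_neg]
        · ring_nf
        · have : Real.sin (-(ω / 2)) ≥ 0 :=
            Real.sin_nonneg_of_nonneg_of_le_pi (by linarith) (by linarith)
          rw [Real.sin_neg] at this; linarith
    rw [h1]
    have := Real.mul_le_sin (x := |ω| / 2) (by positivity) (by linarith)
    calc |ω| / Real.pi = 2 / Real.pi * (|ω| / 2) := by field_simp
      _ ≤ Real.sin (|ω| / 2) := this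
  have haabs : 0 < |a| := lt_of_lt_of_le (by positivity) hA
  have ha0 : a ≠ 0 := by
    intro h; rw [h] at haabs; simp at haabs
  -- derivative computation
  have hd1 : HasDerivAt (fun t : ℝ => m * t / 2) (m / 2) ω := by
    simpa using ((hasDerivAt_id ω).const_mul m).div_const 2
  have hu : HasDerivAt (fun t : ℝ => Real.sin (m * t / 2)) (sc * (m / 2)) ω :=
    by have := (Real.hasDerivAt_sin (m * ω / 2)).comp ω hd1; exact this
  have hu4 : HasDerivAt (fun t : ℝ => Real.sin (m * t / 2) ^ 4)
      (4 * s ^ 3 * (sc * (m / 2))) ω := by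
    simpa using hu.fun_pow 4
  have hd2 : HasDerivAt (fun t : ℝ => t / 2) (1 / 2 : ℝ) ω := by
    simpa using (hasDerivAt_id ω).div_const 2
  have hv : HasDerivAt (fun t : ℝ => Real.sin (t / 2)) (ca * (1 / 2)) ω :=
    by have := (Real.hasDerivAt_sin (ω / 2)).comp ω hd2; exact this
  have hv4 : HasDerivAt (fun t : ℝ => Real.sin (t / 2) ^ 4)
      (4 * a ^ 3 * (ca * (1 / 2))) ω := by
    simpa using hv.fun_pow 4
  have hva : a ^ 4 ≠ 0 := pow_ne_zero 4 ha0
  have hf : HasDerivAt (jackson n)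
      (((1 / m ^ 4) * (4 * s ^ 3 * (sc * (m / 2))) * a ^ 4 -
        (1 / m ^ 4) * s ^ 4 * (4 * a ^ 3 * (ca * (1 / 2)))) / (a ^ 4) ^ 2) ω := by
    have := (hu4.const_mul (1 / m ^ 4)).fun_div hv4 hva
    replace this : HasDerivAt (fun y : ℝ => 1 / m ^ 4 * Real.sin (m * y / 2) ^ 4 / Real.sin (y / 2) ^ 4) _ ω := this
    convert this using 2 <;> simp [jackson, hm_def] <;> ring
  have hderiv := hf.deriv
  set G : ℝ := m * sc * a - s * ca with hG_def
  have hD : deriv (jackson n) ω = 2 / m ^ 4 * (s ^ 3 * G) / a ^ 5 := by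
    rw [hderiv, hG_def]
    field_simp
    ring
  -- bounds
  have hs1 : |s| ≤ 1 := abs_sin_le_one _
  have hsk : |s| ≤ m * |a| := by
    have := abs_sin_nat_mul_le' (n + 1) (ω / 2)
    have h : ((n + 1 : ℕ) : ℝ) * (ω / 2) = m * ω / 2 := by push_cast [hm_def]; ring
    rw [h] at this
    simpa [hm_def] using this
  have hG2 : G ^ 2 ≤ m ^ 2 * a ^ 2 + 1 :=
    cauchy_aux m a s ca sc (Real.sin_sq_add_cos_sq _) (Real.sin_sq_add_cos_sq _)
  have key : 2 * |s| ^ 3 * |G| ≤ 3 * (m * |a|) := by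
    apply key_aux (m * |a|) |s| |G| (by positivity) (abs_nonneg s) (abs_nonneg G) hs1 hsk
    rw [sq_abs, mul_pow, sq_abs]
    exact hG2
  clear_value m a s ca sc G
  clear hm_def ha_def hs_def hca_def hsc_def hG_def hf hderiv hu hu4 hv hv4 hd1 hd2 hG2 ha0 hva hω0 hωl hωr
  have step1 : |deriv (jackson n) ω| ≤ 3 / (m ^ 3 * |a| ^ 4) := by
    rw [hD]
    have habs : |2 / m ^ 4 * (s ^ 3 * G) / a ^ 5| =
        2 / m ^ 4 * (|s| ^ 3 * |G|) / |a| ^ 5 := by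
      rw [abs_div, abs_mul, abs_mul, abs_pow, abs_pow, abs_div]
      congr 2
      simp [abs_of_pos hm0, abs_of_pos (pow_pos hm0 4)]
    rw [habs, div_le_div_iff₀ (by positivity) (by positivity)]
    have expand : 2 / m ^ 4 * (|s| ^ 3 * |G|) * (m ^ 3 * |a| ^ 4) =
        (2 * |s| ^ 3 * |G|) * (|a| ^ 4 / m) := by
      have hm0' : m ≠ 0 := ne_of_gt hm0
      field_simp
    have expand2 : 3 * |a| ^ 5 = (3 * (m * |a|)) * (|a| ^ 4 / m) := by
      rw [mul_comm (3 * (m * |a|)) (|a| ^ 4 / m), div_mul_eq_mul_div, mul_comm]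
      rw [eq_div_iff (ne_of_gt hm0)]
      ring
    rw [expand, expand2]
    apply mul_le_mul_of_nonneg_right key (by positivity)
  have step2 : 3 / (m ^ 3 * |a| ^ 4) ≤ 3 * Real.pi ^ 4 / (m ^ 3 * |ω| ^ 4) := by
    rw [div_le_div_iff₀ (by positivity) (by positivity)]
    have h4 : (|ω| / Real.pi) ^ 4 ≤ |a| ^ 4 := pow_le_pow_left₀ (by positivity) hA 4
    have h4' : |ω| ^ 4 ≤ Real.pi ^ 4 * |a| ^ 4 := by
      have := mul_le_mul_of_nonneg_left h4 (le_of_lt (pow_pos hπ 4))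
      calc |ω| ^ 4 = Real.pi ^ 4 * (|ω| / Real.pi) ^ 4 := by field_simp
        _ ≤ Real.pi ^ 4 * |a| ^ 4 := this
    nlinarith [mul_le_mul_of_nonneg_left h4' (by positivity : (0:ℝ) ≤ 3 * m ^ 3)]
  calc |deriv (jackson n) ω| ≤ 3 / (m ^ 3 * |a| ^ 4) := step1
    _ ≤ 3 * Real.pi ^ 4 / (m ^ 3 * |ω| ^ 4) := step2
end

section
/- Let n ≥ 1 and |ω| ≤ π/(4(n+1)). Then for every integer k with 1 ≤ k ≤ 2n, we have k²cos(kω) − k·sin(kω)·cos(ω)/sin(ω) ≤ 0 and |k² − k·sin(kω)·cos(ω)/sin(ω)| ≤ k⁴ω²/2 (for ω ≠ 0). -/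
open Real

private lemma aux_sin_mul_le (θ : ℝ) : ∀ k : ℕ, 0 ≤ θ → θ ≤ Real.pi / 2 →
    (k : ℝ) * θ ≤ Real.pi →
    (k : ℝ) * Real.sin θ * Real.cos (k * θ) ≤ Real.sin (k * θ) * Real.cos θ := by
  intro k
  induction k with
  | zero => intro _ _ _; simp
  | succ k ih =>
    intro h0 h1 h2
    have hk1 : (k : ℝ) * θ ≤ Real.pi := by
      push_cast at h2; nlinarith
    have ihk := ih h0 h1 hk1
    have hsk : 0 ≤ Real.sin (k * θ) := Real.sin_nonneg_of_nonneg_of_le_pi (by positivity) hk1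
    have hc : 0 ≤ Real.cos θ := Real.cos_nonneg_of_mem_Icc ⟨by linarith [Real.pi_pos], h1⟩
    have hst : 0 ≤ Real.sin θ := Real.sin_nonneg_of_nonneg_of_le_pi h0 (by linarith [Real.pi_pos])
    have e1 : Real.sin ((↑(k + 1)) * θ) = Real.sin (k * θ) * Real.cos θ + Real.cos (k * θ) * Real.sin θ := by
      push_cast; rw [add_mul, one_mul, Real.sin_add]
    have e2 : Real.cos ((↑(k + 1)) * θ) = Real.cos (k * θ) * Real.cos θ - Real.sin (k * θ) * Real.sin θ := by
      push_cast; rw [add_mul, one_mul, Real.cos_add]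
    rw [e1, e2]
    push_cast
    nlinarith [sq_nonneg (Real.sin θ), mul_nonneg (mul_nonneg hsk hst) hst,
      Nat.cast_nonneg (α := ℝ) k]

private lemma aux_abs_sin_le (θ : ℝ) : ∀ k : ℕ, |Real.sin (k * θ)| ≤ (k : ℝ) * |Real.sin θ| := by
  intro k
  induction k with
  | zero => simp
  | succ k ih =>
    have e1 : Real.sin ((↑(k + 1)) * θ) = Real.sin (k * θ) * Real.cos θ + Real.cos (k * θ) * Real.sin θ := by
      push_cast; rw [add_mul, one_mul, Real.sin_add]
    rw [e1]
    push_cast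
    calc |Real.sin (k * θ) * Real.cos θ + Real.cos (k * θ) * Real.sin θ|
        ≤ |Real.sin (k * θ) * Real.cos θ| + |Real.cos (k * θ) * Real.sin θ| := abs_add_le _ _
      _ ≤ (k : ℝ) * |Real.sin θ| + |Real.sin θ| := by
          have a : |Real.sin (k * θ) * Real.cos θ| ≤ |Real.sin (k * θ)| := by
            rw [abs_mul]; exact mul_le_of_le_one_right (abs_nonneg _) (Real.abs_cos_le_one θ)
          have b : |Real.cos (k * θ) * Real.sin θ| ≤ |Real.sin θ| := by
            rw [abs_mul]; exact mul_le_of_le_one_left (abs_nonneg _) (Real.abs_cos_le_one _)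
          linarith
      _ = ((k : ℝ) + 1) * |Real.sin θ| := by ring

private lemma helper_pos (k : ℕ) (hk : 1 ≤ k) (ω : ℝ) (h0 : 0 < ω) (h1 : ω ≤ Real.pi / 2)
    (h2 : (k : ℝ) * ω ≤ Real.pi / 2) :
    (k : ℝ) ^ 2 * Real.cos (k * ω) - k * Real.sin (k * ω) * Real.cos ω / Real.sin ω ≤ 0 ∧
    |(k : ℝ) ^ 2 - k * Real.sin (k * ω) * Real.cos ω / Real.sin ω| ≤ k ^ 4 * ω ^ 2 / 2 := by
  have hπ := Real.pi_pos
  have hs : 0 < Real.sin ω := Real.sin_pos_of_pos_of_lt_pi h0 (by linarith)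
  have hsk : 0 ≤ Real.sin (k * ω) :=
    Real.sin_nonneg_of_nonneg_of_le_pi (by positivity) (by linarith)
  have hc : 0 ≤ Real.cos ω := Real.cos_nonneg_of_mem_Icc ⟨by linarith, h1⟩
  have hkn : (1 : ℝ) ≤ (k : ℝ) := by exact_mod_cast hk
  have L1 := aux_sin_mul_le ω k (le_of_lt h0) h1 (by linarith)
  have L2 : Real.sin (k * ω) ≤ (k : ℝ) * Real.sin ω := by
    have := aux_abs_sin_le ω k
    rw [abs_of_nonneg hsk, abs_of_nonneg hs.le] at this
    exact this
  have hge : (k : ℝ) ^ 2 * Real.cos (k * ω) ≤ k * Real.sin (k * ω) * Real.cos ω / Real.sin ω := by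
    rw [le_div_iff₀ hs]
    nlinarith
  have hle : (k : ℝ) * Real.sin (k * ω) * Real.cos ω / Real.sin ω ≤ (k : ℝ) ^ 2 := by
    rw [div_le_iff₀ hs]
    have t1 : (k:ℝ) * Real.sin (k * ω) * Real.cos ω ≤ (k:ℝ) * Real.sin (k * ω) * 1 :=
      mul_le_mul_of_nonneg_left (Real.cos_le_one ω)
        (mul_nonneg (by linarith : (0:ℝ) ≤ (k:ℝ)) hsk)
    have t2 : (k:ℝ) * Real.sin (k * ω) ≤ (k:ℝ) * ((k:ℝ) * Real.sin ω) :=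
      mul_le_mul_of_nonneg_left L2 (by linarith : (0:ℝ) ≤ (k:ℝ))
    nlinarith
  refine ⟨by linarith, ?_⟩
  rw [abs_le]
  constructor
  · have : (0:ℝ) ≤ (k:ℝ) ^ 4 * ω ^ 2 / 2 := by positivity
    linarith
  · have hcb : 1 - ((k : ℝ) * ω) ^ 2 / 2 ≤ Real.cos (k * ω) :=
      Real.one_sub_sq_div_two_le_cos
    nlinarith [sq_nonneg ((k:ℝ) * ω), sq_nonneg (k:ℝ)]

theorem small_omega_estimates (n : ℕ) (hn : 1 ≤ n) (ω : ℝ) (hω0 : ω ≠ 0)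
    (hω : |ω| ≤ Real.pi / (4 * (n + 1))) (k : ℕ) (hk1 : 1 ≤ k) (hk2 : k ≤ 2 * n) :
    (k : ℝ) ^ 2 * Real.cos (k * ω) - k * Real.sin (k * ω) * Real.cos ω / Real.sin ω ≤ 0 ∧
    |(k : ℝ) ^ 2 - k * Real.sin (k * ω) * Real.cos ω / Real.sin ω| ≤ k ^ 4 * ω ^ 2 / 2 := by
  have hπ := Real.pi_pos
  have hn1 : (1 : ℝ) ≤ (n : ℝ) := by exact_mod_cast hn
  have habs1 : |ω| ≤ Real.pi / 2 := by
    have : Real.pi / (4 * ((n:ℝ) + 1)) ≤ Real.pi / 2 := by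
      apply div_le_div_of_nonneg_left hπ.le (by norm_num) ; linarith
    linarith
  have hk2' : (k : ℝ) ≤ 2 * (n : ℝ) := by exact_mod_cast hk2
  have hkc : (1 : ℝ) ≤ (k : ℝ) := by exact_mod_cast hk1
  have habs2 : (k : ℝ) * |ω| ≤ Real.pi / 2 := by
    calc (k : ℝ) * |ω| ≤ 2 * (n:ℝ) * (Real.pi / (4 * ((n:ℝ) + 1))) := by
          apply mul_le_mul hk2' hω (abs_nonneg _) (by linarith)
      _ ≤ Real.pi / 2 := by
          rw [mul_div_assoc', div_le_div_iff₀ (by positivity) (by norm_num : (0:ℝ) < 2)]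
          nlinarith
  rcases lt_or_gt_of_ne hω0 with hneg | hpos
  · have h0 : 0 < -ω := by linarith
    have habs : |ω| = -ω := abs_of_neg hneg
    have := helper_pos k hk1 (-ω) h0 (by rw [habs] at habs1; exact habs1)
      (by rw [habs] at habs2; exact habs2)
    simp only [mul_neg, Real.sin_neg, Real.cos_neg, neg_mul, neg_div_neg_eq, neg_sq] at this
    exact this
  · have habs : |ω| = ω := abs_of_pos hpos
    exact helper_pos k hk1 ω hpos (by rw [habs] at habs1; exact habs1)
      (by rw [habs] at habs2; exact habs2)
end

section
/- Let n ≥ 1 and 0 < |ω| ≤ π/(4(n+1)), and let k be an integer with 1 ≤ k ≤ 2n. Then |k²cos(kω)sin(ω) − k·sin(kω)cos(ω)| / sin²(ω) ≤ k⁴|ω| / (1 + cos(ω)). -/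
set_option maxHeartbeats 1000000


open Real

/-- Derivative computation for `g t = K cos(Kt) sin t - sin(Kt) cos t`. -/
lemma g_hasDerivAt (K t : ℝ) :
    HasDerivAt (fun t => K * Real.cos (K * t) * Real.sin t - Real.sin (K * t) * Real.cos t)
      ((1 - K ^ 2) * Real.sin (K * t) * Real.sin t) t := by
  have hKt : HasDerivAt (fun t : ℝ => K * t) K t := by
    simpa using (hasDerivAt_id t).const_mul K
  have hcos : HasDerivAt (fun t : ℝ => Real.cos (K * t)) (-Real.sin (K * t) * K) t :=
    (Real.hasDerivAt_cos (K * t)).comp t hKt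
  have hsin : HasDerivAt (fun t : ℝ => Real.sin (K * t)) (Real.cos (K * t) * K) t :=
    (Real.hasDerivAt_sin (K * t)).comp t hKt
  have h1 : HasDerivAt (fun t : ℝ => K * Real.cos (K * t) * Real.sin t)
      ((K * (-Real.sin (K * t) * K)) * Real.sin t + (K * Real.cos (K * t)) * Real.cos t) t :=
    (hcos.const_mul K).mul (Real.hasDerivAt_sin t)
  have h2 : HasDerivAt (fun t : ℝ => Real.sin (K * t) * Real.cos t)
      ((Real.cos (K * t) * K) * Real.cos t + Real.sin (K * t) * (-Real.sin t)) t :=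
    hsin.mul (Real.hasDerivAt_cos t)
  have := h1.sub h2
  refine this.congr_deriv ?_
  ring

/-- Integral bound: for `0 < ω` and `1 ≤ K`,
`|K cos(Kω) sin ω - sin(Kω) cos ω| ≤ K^3 ω^3 / 3`. -/
lemma g_bound (K ω : ℝ) (hK : 1 ≤ K) (hω : 0 < ω) :
    |K * Real.cos (K * ω) * Real.sin ω - Real.sin (K * ω) * Real.cos ω| ≤ K ^ 3 * ω ^ 3 / 3 := by
  set g : ℝ → ℝ := fun t => K * Real.cos (K * t) * Real.sin t - Real.sin (K * t) * Real.cos t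
  set g' : ℝ → ℝ := fun t => (1 - K ^ 2) * Real.sin (K * t) * Real.sin t
  have hcont : Continuous g' := by
    unfold g'
    continuity
  have hftc : ∫ t in (0:ℝ)..ω, g' t = g ω - g 0 :=
    intervalIntegral.integral_eq_sub_of_hasDerivAt (fun t _ => g_hasDerivAt K t)
      (hcont.intervalIntegrable 0 ω)
  have hg0 : g 0 = 0 := by simp [g]
  have habs : |g ω| ≤ ∫ t in (0:ℝ)..ω, |g' t| := by
    have := intervalIntegral.norm_integral_le_integral_norm (μ := MeasureTheory.volume)
      (f := g') hω.le
    rw [hftc, hg0, sub_zero] at this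
    simpa [Real.norm_eq_abs] using this
  have hmono : (∫ t in (0:ℝ)..ω, |g' t|) ≤ ∫ t in (0:ℝ)..ω, K ^ 3 * t ^ 2 := by
    apply intervalIntegral.integral_mono_on hω.le
    · exact (hcont.abs.intervalIntegrable 0 ω)
    · exact (Continuous.intervalIntegrable (by continuity) 0 ω)
    · intro t ht
      obtain ⟨ht0, htω⟩ := ht
      have h1 : |Real.sin (K * t)| ≤ K * t := by
        have h := Real.abs_sin_le_abs (x := K * t)
        rwa [abs_of_nonneg (mul_nonneg (by linarith) ht0)] at h
      have h2 : |Real.sin t| ≤ t := by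
        have h := Real.abs_sin_le_abs (x := t)
        rwa [abs_of_nonneg ht0] at h
      have h3 : |g' t| = |1 - K ^ 2| * |Real.sin (K * t)| * |Real.sin t| := by
        simp [g', abs_mul]
      rw [h3]
      have hK2 : |1 - K ^ 2| ≤ K ^ 2 := by
        rw [abs_sub_comm, abs_of_nonneg (by nlinarith)]
        nlinarith
      calc |1 - K ^ 2| * |Real.sin (K * t)| * |Real.sin t|
          ≤ K ^ 2 * (K * t) * t := by
            apply mul_le_mul _ h2 (abs_nonneg _) (by positivity)
            exact mul_le_mul hK2 h1 (abs_nonneg _) (by positivity)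
        _ = K ^ 3 * t ^ 2 := by ring
  have hval : (∫ t in (0:ℝ)..ω, K ^ 3 * t ^ 2) = K ^ 3 * ω ^ 3 / 3 := by
    rw [intervalIntegral.integral_const_mul]
    rw [integral_pow]
    norm_num
    ring
  calc |g ω| ≤ ∫ t in (0:ℝ)..ω, |g' t| := habs
    _ ≤ ∫ t in (0:ℝ)..ω, K ^ 3 * t ^ 2 := hmono
    _ = K ^ 3 * ω ^ 3 / 3 := hval

/-- Bound valid for all nonzero ω with |ω| arbitrary sign. -/
lemma g_bound_abs (K ω : ℝ) (hK : 1 ≤ K) (hω : ω ≠ 0) :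
    |K * Real.cos (K * ω) * Real.sin ω - Real.sin (K * ω) * Real.cos ω|
      ≤ K ^ 3 * |ω| ^ 3 / 3 := by
  rcases lt_or_gt_of_ne hω with h | h
  · have hpos : 0 < -ω := by linarith
    have := g_bound K (-ω) hK hpos
    have heq : K * Real.cos (K * -ω) * Real.sin (-ω) - Real.sin (K * -ω) * Real.cos (-ω)
        = -(K * Real.cos (K * ω) * Real.sin ω - Real.sin (K * ω) * Real.cos ω) := by
      simp [mul_neg, Real.sin_neg, Real.cos_neg]
      ring
    rw [heq, abs_neg] at this
    rwa [abs_of_neg h]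
  · have := g_bound K ω hK h
    rwa [abs_of_pos h]

theorem small_omega_ratio_estimate (n : ℕ) (hn : 1 ≤ n) (ω : ℝ) (hω0 : 0 < |ω|)
    (hω : |ω| ≤ Real.pi / (4 * (n + 1))) (k : ℕ) (hk1 : 1 ≤ k) (hk2 : k ≤ 2 * n) :
    |(k : ℝ) ^ 2 * Real.cos (k * ω) * Real.sin ω - k * Real.sin (k * ω) * Real.cos ω|
        / Real.sin ω ^ 2
      ≤ (k : ℝ) ^ 4 * |ω| / (1 + Real.cos ω) := by
  have hωne : ω ≠ 0 := fun h => by simp [h] at hω0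
  have hpi : (3.14 : ℝ) < Real.pi := Real.pi_gt_d2
  have hpi4 : Real.pi < 3.15 := Real.pi_lt_d2
  -- |ω| ≤ π/8
  have hn8 : (8 : ℝ) ≤ 4 * ((n : ℝ) + 1) := by
    have : (1 : ℝ) ≤ (n : ℝ) := by exact_mod_cast hn
    linarith
  have hω8 : |ω| ≤ Real.pi / 8 := by
    calc |ω| ≤ Real.pi / (4 * (n + 1)) := hω
      _ ≤ Real.pi / 8 := by
        apply div_le_div_of_nonneg_left Real.pi_pos.le (by norm_num) hn8
  have hωlt : |ω| < Real.pi / 2 := lt_of_le_of_lt hω8 (by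
    rw [div_lt_div_iff₀ (by norm_num) (by norm_num)]; linarith)
  -- cos ω > 0
  have hcos : 0 < Real.cos ω := by
    apply Real.cos_pos_of_mem_Ioo
    constructor
    · have := abs_lt.1 hωlt
      linarith [this.1]
    · exact (abs_lt.1 hωlt).2
  have h1c : 0 < 1 + Real.cos ω := by linarith
  -- sin ω ≠ 0, sin² > 0
  have hsin2 : 0 < Real.sin ω ^ 2 := by
    have hsne : Real.sin ω ≠ 0 := by
      rcases lt_or_gt_of_ne hωne with h | h
      · have : Real.sin ω < 0 := by
          apply Real.sin_neg_of_neg_of_neg_pi_lt h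
          have := abs_lt.1 hωlt
          nlinarith [Real.pi_pos, this.1]
        linarith
      · have : 0 < Real.sin ω := by
          apply Real.sin_pos_of_pos_of_lt_pi h
          have := abs_lt.1 hωlt
          nlinarith [Real.pi_pos, this.2]
        linarith
    positivity
  -- sin² ω = (1 - cos ω)(1 + cos ω)
  have hsinsq : Real.sin ω ^ 2 = (1 - Real.cos ω) * (1 + Real.cos ω) := by
    have := Real.sin_sq_add_cos_sq ω
    nlinarith
  -- 1 - cos ω ≥ |ω|^2 / 3
  have hcoslb : |ω| ^ 2 / 3 ≤ 1 - Real.cos ω := by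
    set x := |ω| with hx
    have hx0 : 0 < x := hω0
    have hx1 : x ≤ 1 := by
      calc x ≤ Real.pi / 8 := hω8
        _ ≤ 1 := by linarith
    have hs : x / 2 - (x / 2) ^ 3 / 4 < Real.sin (x / 2) := by
      have := Real.sin_gt_sub_cube (x := x / 2) (by linarith)
      nlinarith [pow_pos (half_pos hx0) 3]
    have hcosx : Real.cos x = Real.cos ω := by
      rcases abs_choice ω with h | h
      · rw [hx, h]
      · rw [hx, h, Real.cos_neg]
    have hcos_sq : Real.cos (x / 2) ^ 2 = 1 / 2 + Real.cos x / 2 := by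
      have := Real.cos_sq (x / 2)
      rwa [show 2 * (x / 2) = x by ring] at this
    have hpyth : Real.sin (x / 2) ^ 2 + Real.cos (x / 2) ^ 2 = 1 := Real.sin_sq_add_cos_sq _
    -- 1 - cos x = 2 sin(x/2)^2
    have h2 : 1 - Real.cos x = 2 * Real.sin (x / 2) ^ 2 := by nlinarith
    rw [← hcosx, h2]
    have hslb : x / 2 - (x / 2) ^ 3 / 4 ≥ x / 2 * (1 - x ^ 2 / 16) := by nlinarith
    have hpos : 0 < x / 2 * (1 - x ^ 2 / 16) := by nlinarith
    have : Real.sin (x / 2) ^ 2 ≥ (x / 2 * (1 - x ^ 2 / 16)) ^ 2 := by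
      have h3 : x / 2 * (1 - x ^ 2 / 16) < Real.sin (x / 2) := lt_of_le_of_lt hslb hs
      nlinarith
    have hx2 : x ^ 2 ≤ 1 := by nlinarith
    nlinarith [this, hx2, sq_nonneg x, sq_nonneg (x * x), sq_nonneg (x * x * x),
      mul_nonneg (sq_nonneg x) (sub_nonneg.2 hx2)]
  -- main numerator bound
  set K := (k : ℝ) with hKdef
  have hK1 : 1 ≤ K := by rw [hKdef]; exact_mod_cast hk1
  have hg := g_bound_abs K ω hK1 hωne
  have hnum : |K ^ 2 * Real.cos (K * ω) * Real.sin ω - K * Real.sin (K * ω) * Real.cos ω|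
      ≤ K ^ 4 * |ω| * (1 - Real.cos ω) := by
    have heq : K ^ 2 * Real.cos (K * ω) * Real.sin ω - K * Real.sin (K * ω) * Real.cos ω
        = K * (K * Real.cos (K * ω) * Real.sin ω - Real.sin (K * ω) * Real.cos ω) := by ring
    rw [heq, abs_mul, abs_of_nonneg (by linarith : (0:ℝ) ≤ K)]
    calc K * |K * Real.cos (K * ω) * Real.sin ω - Real.sin (K * ω) * Real.cos ω|
        ≤ K * (K ^ 3 * |ω| ^ 3 / 3) := by
          apply mul_le_mul_of_nonneg_left hg (by linarith)
      _ = K ^ 4 * |ω| * (|ω| ^ 2 / 3) := by ring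
      _ ≤ K ^ 4 * |ω| * (1 - Real.cos ω) := by
          apply mul_le_mul_of_nonneg_left hcoslb (by positivity)
  -- conclude
  rw [div_le_div_iff₀ hsin2 h1c]
  calc |K ^ 2 * Real.cos (K * ω) * Real.sin ω - K * Real.sin (K * ω) * Real.cos ω|
        * (1 + Real.cos ω)
      ≤ (K ^ 4 * |ω| * (1 - Real.cos ω)) * (1 + Real.cos ω) := by
        apply mul_le_mul_of_nonneg_right hnum h1c.le
    _ = K ^ 4 * |ω| * Real.sin ω ^ 2 := by rw [hsinsq]; ring
end
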